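/- arXiv:1305.5955 — 3 statements merged into one kernel-verified Lean document; each statement's English description precedes it below -/
import Mathlib

section
/- Let P and P' be the configuration matrices of tensegrity frameworks (G,p) in ℝ^r and (G,p') in ℝ^{r'}, both with centroid at the origin (P^T e = 0 and P'^T e = 0). Then (G,p') is dominated by (G,p) if and only if P'P'^T − PP^T = ℰ(y) + x e^T + e x^T for some y = (y_ij) ∈ ℝ^{|Ē|+|C|+|S|} with y_ij ≥ 0 for all {i,j} ∈ C and y_ij ≤ 0 for all {i,j} ∈ S, where x = −(1/n) ℰ(y) e + (1/(2n²)) (e^T ℰ(y) e) e. -/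
open Matrix BigOperators

noncomputable section

/-- Squared Euclidean distance between two points of `ℝ^r`. -/
def sqDist {r : ℕ} (x y : Fin r → ℝ) : ℝ := ∑ k, (x k - y k) ^ 2

/-- `(G,q)` is dominated by `(G,p)`, where the edges of `G` are partitioned into
bars `B`, cables `C` and struts `S`. -/
def Dominates {n r s : ℕ} (B C S : Set (Fin n × Fin n))
    (p : Fin n → Fin r → ℝ) (q : Fin n → Fin s → ℝ) : Prop :=
  (∀ e ∈ B, sqDist (q e.1) (q e.2) = sqDist (p e.1) (p e.2)) ∧
  (∀ e ∈ C, sqDist (q e.1) (q e.2) ≤ sqDist (p e.1) (p e.2)) ∧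
  (∀ e ∈ S, sqDist (p e.1) (p e.2) ≤ sqDist (q e.1) (q e.2))

/-- `(G,q)` is congruent to `(G,p)`. -/
def TensegrityCongruent {n r s : ℕ} (p : Fin n → Fin r → ℝ) (q : Fin n → Fin s → ℝ) : Prop :=
  ∀ i j, sqDist (q i) (q j) = sqDist (p i) (p j)

/-- `(G,p)` is universally rigid: every framework `(G,q)` in any dimension `s`
dominated by `(G,p)` is congruent to `(G,p)`. -/
def UniversallyRigid {n r : ℕ} (B C S : Set (Fin n × Fin n))
    (p : Fin n → Fin r → ℝ) : Prop :=
  ∀ (s : ℕ) (q : Fin n → Fin s → ℝ), Dominates B C S p q → TensegrityCongruent p q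

/-- `(G,q)` is affinely-dominated by `(G,p)`: dominated and `q^i = A p^i + b`. -/
def AffinelyDominated {n r : ℕ} (B C S : Set (Fin n × Fin n))
    (p q : Fin n → Fin r → ℝ) : Prop :=
  Dominates B C S p q ∧
  ∃ (A : Matrix (Fin r) (Fin r) ℝ) (b : Fin r → ℝ), ∀ i, q i = A.mulVec (p i) + b

/-- `ω` is an equilibrium stress of the framework with edge set `E` and configuration `p`. -/
def IsStress {n r : ℕ} (E : Set (Fin n × Fin n)) (p : Fin n → Fin r → ℝ)
    (ω : Fin n → Fin n → ℝ) : Prop :=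
  (∀ i j, ω i j = ω j i) ∧ (∀ i j, (i, j) ∉ E → ω i j = 0) ∧
  (∀ i : Fin n, ∑ j, ω i j • (p i - p j) = 0)

/-- A stress is proper if `ω_ij ≥ 0` on cables and `ω_ij ≤ 0` on struts. -/
def IsProperStress {n : ℕ} (C S : Set (Fin n × Fin n)) (ω : Fin n → Fin n → ℝ) : Prop :=
  (∀ e ∈ C, 0 ≤ ω e.1 e.2) ∧ (∀ e ∈ S, ω e.1 e.2 ≤ 0)

/-- The stress matrix `Ω` associated to the stress `ω`. -/
def stressMatrix {n : ℕ} (ω : Fin n → Fin n → ℝ) : Matrix (Fin n) (Fin n) ℝ :=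
  Matrix.of fun i j => if i = j then ∑ k, ω i k else -ω i j

/-- `B`, `C`, `S` are the (symmetrically encoded) bars, cables and struts of a
simple connected tensegrity graph on `{1,…,n}`. -/
def TensegrityGraph {n : ℕ} (B C S : Set (Fin n × Fin n)) : Prop :=
  (∀ i j, (i, j) ∈ B → (j, i) ∈ B) ∧ (∀ i j, (i, j) ∈ C → (j, i) ∈ C) ∧
  (∀ i j, (i, j) ∈ S → (j, i) ∈ S) ∧ (∀ i : Fin n, (i, i) ∉ B ∪ C ∪ S) ∧
  B ∩ C = ∅ ∧ B ∩ S = ∅ ∧ C ∩ S = ∅ ∧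
  (SimpleGraph.fromRel fun i j => (i, j) ∈ B ∪ C ∪ S).Connected

/-- A set of points of `ℝ^r` is in general position if every `r+1` of them are
affinely independent. -/
def SetInGeneralPosition {r : ℕ} (A : Set (Fin r → ℝ)) : Prop :=
  ∀ T : Finset (Fin r → ℝ), ↑T ⊆ A → T.card = r + 1 →
    AffineIndependent ℝ (fun x : {x // x ∈ T} => (x : Fin r → ℝ))

/-- `Z` is a Gale matrix of the configuration with matrix `P`: its columns form a
basis of the null space of the matrix obtained by stacking `Pᵀ` on top of `eᵀ`. -/
def IsGaleMatrix {n r m : ℕ} (P : Matrix (Fin n) (Fin r) ℝ)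
    (Z : Matrix (Fin n) (Fin m) ℝ) : Prop :=
  (∀ k, Pᵀ *ᵥ (fun i => Z i k) = 0) ∧ (∀ k, ∑ i, Z i k = 0) ∧
  LinearIndependent ℝ (fun k i => Z i k) ∧
  ∀ v : Fin n → ℝ, Pᵀ *ᵥ v = 0 → ∑ i, v i = 0 →
    v ∈ Submodule.span ℝ (Set.range fun k i => Z i k)

/-- `Ω` is a stress matrix of the framework with edge set `E` and configuration
matrix `P` (with centroid at the origin): it is symmetric, vanishes on missing
edges, and satisfies `Pᵀ Ω = 0` and `Ω e = 0`. -/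
def IsStressMatrix {n r : ℕ} (E : Set (Fin n × Fin n)) (P : Matrix (Fin n) (Fin r) ℝ)
    (Ω : Matrix (Fin n) (Fin n) ℝ) : Prop :=
  Ω.IsSymm ∧ (∀ i j, i ≠ j → (i, j) ∉ E → Ω i j = 0) ∧
  Pᵀ * Ω = 0 ∧ Ω *ᵥ (fun _ => (1 : ℝ)) = 0

/-- The matrix `F^{ij} = (e^i - e^j)(e^i - e^j)ᵀ`. -/
def Fmat {n : ℕ} (i j : Fin n) : Matrix (Fin n) (Fin n) ℝ :=
  Matrix.vecMulVec (Pi.single i 1 - Pi.single j 1) (Pi.single i 1 - Pi.single j 1)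

/-- The matrix `E^{ij} = e^i (e^j)ᵀ + e^j (e^i)ᵀ`. -/
def Emat {n : ℕ} (i j : Fin n) : Matrix (Fin n) (Fin n) ℝ :=
  Matrix.vecMulVec (Pi.single i 1) (Pi.single j 1) +
    Matrix.vecMulVec (Pi.single j 1) (Pi.single i 1)

/-- The matrix `L^i = e^i eᵀ + e (e^i)ᵀ`. -/
def Lmat {n : ℕ} (i : Fin n) : Matrix (Fin n) (Fin n) ℝ :=
  Matrix.vecMulVec (Pi.single i 1) (fun _ => 1) +
    Matrix.vecMulVec (fun _ => 1) (Pi.single i 1)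

/-- `ℰ(y) = Σ y_ij E^{ij}` (for `y` supported on the relevant pairs `i < j`). -/
def EscrY {n : ℕ} (y : Fin n → Fin n → ℝ) : Matrix (Fin n) (Fin n) ℝ :=
  ∑ i, ∑ j, y i j • Emat i j

/-- The vector `x = -(1/n) ℰ(y) e + (1/(2n²)) (eᵀ ℰ(y) e) e`. -/
def xvec {n : ℕ} (y : Fin n → Fin n → ℝ) : Fin n → ℝ :=
  (-(1 / (n : ℝ))) • (EscrY y *ᵥ fun _ => (1 : ℝ)) +
    ((1 / (2 * (n : ℝ) ^ 2)) * ((fun _ => (1 : ℝ)) ⬝ᵥ (EscrY y *ᵥ fun _ => (1 : ℝ)))) •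
      (fun _ : Fin n => (1 : ℝ))


lemma EscrY_apply {n : ℕ} (y : Fin n → Fin n → ℝ) (a b : Fin n) :
    EscrY y a b = y a b + y b a := by
  unfold EscrY Emat
  simp only [Matrix.sum_apply, Matrix.smul_apply, Matrix.add_apply, Matrix.vecMulVec_apply,
    Pi.single_apply, smul_eq_mul, mul_add]
  rw [Finset.sum_comm]
  simp [Finset.sum_add_distrib, mul_ite, Finset.sum_ite_eq, Finset.sum_ite_eq']

lemma sqDist_eq' {r : ℕ} (x y : Fin r → ℝ) :
    sqDist x y = (∑ k, x k * x k) + (∑ k, y k * y k) - 2 * ∑ k, x k * y k := by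
  unfold sqDist
  rw [Finset.mul_sum, ← Finset.sum_add_distrib, ← Finset.sum_sub_distrib]
  exact Finset.sum_congr rfl fun k _ => by ring

/-- Gram-matrix characterization of domination: `(G,p')` is dominated
by `(G,p)` iff `P'P'ᵀ - PPᵀ = ℰ(y) + x eᵀ + e xᵀ` for some `y` supported on
`Ē ∪ C ∪ S` with `y ≥ 0` on cables and `y ≤ 0` on struts, where
`x = -(1/n) ℰ(y) e + (1/(2n²))(eᵀ ℰ(y) e) e`. -/
theorem statement10 {n r r' : ℕ}
    (B C S : Set (Fin n × Fin n)) (hG : TensegrityGraph B C S)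
    (p : Fin n → Fin r → ℝ) (p' : Fin n → Fin r' → ℝ)
    (hcentroid : ∀ k, ∑ i, p i k = 0)
    (hcentroid' : ∀ k, ∑ i, p' i k = 0) :
    Dominates B C S p p' ↔
      ∃ y : Fin n → Fin n → ℝ,
        (∀ i j, y i j ≠ 0 →
          i < j ∧ ((i, j) ∉ B ∪ C ∪ S ∨ (i, j) ∈ C ∨ (i, j) ∈ S)) ∧
        (∀ i j, (i, j) ∈ C → 0 ≤ y i j) ∧
        (∀ i j, (i, j) ∈ S → y i j ≤ 0) ∧
        Matrix.of p' * (Matrix.of p')ᵀ - Matrix.of p * (Matrix.of p)ᵀ =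
          EscrY y + Matrix.vecMulVec (xvec y) (fun _ => 1) +
            Matrix.vecMulVec (fun _ => 1) (xvec y) := by
  obtain ⟨hBsym, hCsym, hSsym, hloop, hBC, hBS, hCS, -⟩ := hG
  set Gm : Fin n → Fin n → ℝ := fun a b => ∑ k, p a k * p b k with hGm
  set Gm' : Fin n → Fin n → ℝ := fun a b => ∑ k, p' a k * p' b k with hGm'
  set D : Fin n → Fin n → ℝ := fun a b => Gm' a b - Gm a b with hD
  have hsq : ∀ a b, sqDist (p a) (p b) = Gm a a + Gm b b - 2 * Gm a b :=
    fun a b => sqDist_eq' (p a) (p b)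
  have hsq' : ∀ a b, sqDist (p' a) (p' b) = Gm' a a + Gm' b b - 2 * Gm' a b :=
    fun a b => sqDist_eq' (p' a) (p' b)
  constructor
  · rintro ⟨hB, hC, hS⟩
    have hGsym : ∀ a b, Gm a b = Gm b a := fun a b =>
      Finset.sum_congr rfl fun k _ => mul_comm _ _
    have hGsym' : ∀ a b, Gm' a b = Gm' b a := fun a b =>
      Finset.sum_congr rfl fun k _ => mul_comm _ _
    have hrowG : ∀ a, ∑ b, Gm a b = 0 := by
      intro a
      calc (∑ b, ∑ k, p a k * p b k) = ∑ k, p a k * ∑ b, p b k := by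
            rw [Finset.sum_comm]
            exact Finset.sum_congr rfl fun k _ => (Finset.mul_sum _ _ _).symm
        _ = 0 := by simp [hcentroid]
    have hrowG' : ∀ a, ∑ b, Gm' a b = 0 := by
      intro a
      calc (∑ b, ∑ k, p' a k * p' b k) = ∑ k, p' a k * ∑ b, p' b k := by
            rw [Finset.sum_comm]
            exact Finset.sum_congr rfl fun k _ => (Finset.mul_sum _ _ _).symm
        _ = 0 := by simp [hcentroid']
    have hrow : ∀ a, ∑ b, D a b = 0 := by
      intro a
      rw [hD]
      simp only [Finset.sum_sub_distrib]
      rw [hrowG a, hrowG' a, sub_zero]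
    set y : Fin n → Fin n → ℝ :=
      fun i j => if i < j then (sqDist (p i) (p j) - sqDist (p' i) (p' j)) / 2 else 0 with hy
    have hE : ∀ a b, EscrY y a b = D a b - (D a a + D b b) / 2 := by
      intro a b
      rw [EscrY_apply, hD]
      simp only
      rcases lt_trichotomy a b with h | h | h
      · rw [hy]
        simp only [if_pos h, if_neg (not_lt.2 h.le)]
        rw [hsq a b, hsq' a b]
        ring
      · subst h
        rw [hy]
        simp only [lt_irrefl, if_false]
        ring
      · rw [hy]
        simp only [if_pos h, if_neg (not_lt.2 h.le)]
        rw [hsq b a, hsq' b a, hGsym b a, hGsym' b a]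
        ring
    refine ⟨y, ?_, ?_, ?_, ?_⟩
    · intro i j hne
      have hij : i < j := by
        by_contra h
        exact hne (by rw [hy]; simp [h])
      refine ⟨hij, ?_⟩
      by_cases hmem : (i, j) ∈ B ∪ C ∪ S
      · rcases hmem with (hb | hc) | hs
        · exfalso
          apply hne
          have heq := hB (i, j) hb
          rw [hy]
          simp only [if_pos hij]
          rw [heq]
          ring
        · exact Or.inr (Or.inl hc)
        · exact Or.inr (Or.inr hs)
      · exact Or.inl hmem
    · intro i j hc
      rcases lt_or_ge i j with h | h
      · have hle := hC (i, j) hc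
        rw [hy]
        simp only [if_pos h]
        simp only at hle
        linarith
      · rw [hy]; simp [not_lt.2 h]
    · intro i j hs
      rcases lt_or_ge i j with h | h
      · have hle := hS (i, j) hs
        rw [hy]
        simp only [if_pos h]
        simp only at hle
        linarith
      · rw [hy]; simp [not_lt.2 h]
    · have hErow : ∀ c, (∑ b, EscrY y c b) = -(((n : ℝ) * D c c + ∑ t, D t t) / 2) := by
        intro c
        calc (∑ b, EscrY y c b) = ∑ b, (D c b - (D c c + D b b) / 2) :=
              Finset.sum_congr rfl fun b _ => hE c b
          _ = (∑ b, D c b) - (∑ b, (D c c + D b b)) / 2 := by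
              rw [Finset.sum_sub_distrib, Finset.sum_div]
          _ = -(((n : ℝ) * D c c + ∑ t, D t t) / 2) := by
              rw [hrow c, Finset.sum_add_distrib, Finset.sum_const, Finset.card_univ,
                Fintype.card_fin, nsmul_eq_mul]
              ring
      have e1 : ∀ c, (EscrY y *ᵥ fun _ => (1 : ℝ)) c
          = -(((n : ℝ) * D c c + ∑ t, D t t) / 2) := by
        intro c
        simp only [Matrix.mulVec, dotProduct, mul_one]
        exact hErow c
      have e2 : ((fun _ => (1 : ℝ)) ⬝ᵥ (EscrY y *ᵥ fun _ => (1 : ℝ)))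
          = -((n : ℝ) * ∑ t, D t t) := by
        simp only [dotProduct, one_mul]
        calc (∑ c, (EscrY y *ᵥ fun _ => (1 : ℝ)) c)
            = ∑ c, -(((n : ℝ) * D c c + ∑ t, D t t) / 2) :=
              Finset.sum_congr rfl fun c _ => e1 c
          _ = -((n : ℝ) * ∑ t, D t t) := by
              rw [Finset.sum_neg_distrib, ← Finset.sum_div, Finset.sum_add_distrib,
                ← Finset.mul_sum, Finset.sum_const, Finset.card_univ, Fintype.card_fin,
                nsmul_eq_mul]
              ring
      have hx : ∀ c, xvec y c = D c c / 2 := by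
        intro c
        have hn : ((n : ℝ)) ≠ 0 := Nat.cast_ne_zero.mpr c.pos.ne'
        unfold xvec
        simp only [Pi.add_apply, Pi.smul_apply, smul_eq_mul, e2, e1 c, mul_one]
        field_simp
        ring
      ext a b
      simp only [Matrix.sub_apply, Matrix.add_apply, Matrix.mul_apply, Matrix.transpose_apply,
        Matrix.of_apply, Matrix.vecMulVec_apply, hE a b, hx a, hx b, mul_one, one_mul]
      rw [hD]
      simp only [hGm, hGm']
      ring
  · rintro ⟨y, hsupp, hyC, hyS, heq⟩
    have hydiag : ∀ i, y i i = 0 := by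
      intro i
      by_contra h
      exact absurd (hsupp i i h).1 (lt_irrefl i)
    have hent : ∀ a b, Gm' a b - Gm a b = EscrY y a b + xvec y a + xvec y b := by
      intro a b
      have h := Matrix.ext_iff.mpr heq a b
      simp only [Matrix.sub_apply, Matrix.add_apply, Matrix.mul_apply, Matrix.transpose_apply,
        Matrix.of_apply, Matrix.vecMulVec_apply, mul_one, one_mul] at h
      simp only [hGm, hGm']
      linarith
    have key : ∀ i j, sqDist (p' i) (p' j) = sqDist (p i) (p j) - 2 * (y i j + y j i) := by
      intro i j
      have h1 := hent i i
      have h2 := hent j j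
      have h3 := hent i j
      rw [EscrY_apply] at h1 h2 h3
      rw [hydiag i] at h1
      rw [hydiag j] at h2
      rw [hsq i j, hsq' i j]
      linarith
    refine ⟨?_, ?_, ?_⟩
    · rintro ⟨i, j⟩ hb
      have hyij : y i j = 0 := by
        by_contra h
        rcases (hsupp i j h).2 with hmem | hc | hs
        · exact hmem (Set.mem_union_left _ (Set.mem_union_left _ hb))
        · exact Set.notMem_empty _ (hBC ▸ Set.mem_inter hb hc)
        · exact Set.notMem_empty _ (hBS ▸ Set.mem_inter hb hs)
      have hyji : y j i = 0 := by
        have hb' := hBsym i j hb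
        by_contra h
        rcases (hsupp j i h).2 with hmem | hc | hs
        · exact hmem (Set.mem_union_left _ (Set.mem_union_left _ hb'))
        · exact Set.notMem_empty _ (hBC ▸ Set.mem_inter hb' hc)
        · exact Set.notMem_empty _ (hBS ▸ Set.mem_inter hb' hs)
      rw [key i j, hyij, hyji]
      ring
    · rintro ⟨i, j⟩ hc
      have h1 := hyC i j hc
      have h2 := hyC j i (hCsym i j hc)
      rw [key i j]
      linarith
    · rintro ⟨i, j⟩ hs
      have h1 := hyS i j hs
      have h2 := hyS j i (hSsym i j hs)
      rw [key i j]
      linarith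
end
end

section
/- Let (G,p) be an r-dimensional tensegrity framework on n vertices in ℝ^r and let Ω be a proper positive semidefinite stress matrix of (G,p) of rank n−r−1. Then (G,p) is dimensionally rigid, i.e., no s-dimensional tensegrity framework (G,q) with s ≥ r+1 is dominated by (G,p). -/
open Matrix BigOperators

noncomputable section

/-- Row formula for the stress matrix acting on a vector. -/
private lemma rowsum {n : ℕ} (ω : Fin n → Fin n → ℝ) (hdiag : ∀ i, ω i i = 0)
    (u : Fin n → ℝ) (i : Fin n) :
    (stressMatrix ω *ᵥ u) i = ∑ j, ω i j * (u i - u j) := by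
  have hterm : ∀ j : Fin n, stressMatrix ω i j * u j
      = (if i = j then ((∑ k, ω i k) * u j + ω i j * u j) else 0) - ω i j * u j := by
    intro j
    simp only [stressMatrix, Matrix.of_apply]
    split_ifs with h <;> ring
  calc (stressMatrix ω *ᵥ u) i = ∑ j, stressMatrix ω i j * u j := rfl
    _ = ∑ j, ((if i = j then ((∑ k, ω i k) * u j + ω i j * u j) else 0) - ω i j * u j) :=
        Finset.sum_congr rfl fun j _ => hterm j
    _ = (∑ j, if i = j then ((∑ k, ω i k) * u j + ω i j * u j) else 0) - ∑ j, ω i j * u j := by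
        rw [Finset.sum_sub_distrib]
    _ = ((∑ k, ω i k) * u i + ω i i * u i) - ∑ j, ω i j * u j := by
        rw [Finset.sum_ite_eq]; simp
    _ = (∑ j, ω i j * u i) - ∑ j, ω i j * u j := by rw [hdiag i, Finset.sum_mul]; ring
    _ = ∑ j, ω i j * (u i - u j) := by
        rw [← Finset.sum_sub_distrib]
        exact Finset.sum_congr rfl fun j _ => by ring

/-- Quadratic form identity for the stress matrix. -/
private lemma quadid {n : ℕ} (ω : Fin n → Fin n → ℝ) (hsym : ∀ i j, ω i j = ω j i)
    (hdiag : ∀ i, ω i i = 0) (u : Fin n → ℝ) :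
    ∑ i, ∑ j, ω i j * (u i - u j) ^ 2 = 2 * (u ⬝ᵥ (stressMatrix ω *ᵥ u)) := by
  have hA : (∑ i, ∑ j, ω i j * (u i ^ 2 - u j ^ 2)) = 0 := by
    have h1 : (∑ i, ∑ j, ω i j * (u i ^ 2 - u j ^ 2))
        = -∑ i, ∑ j, ω i j * (u i ^ 2 - u j ^ 2) := by
      calc (∑ i, ∑ j, ω i j * (u i ^ 2 - u j ^ 2))
          = ∑ j, ∑ i, ω i j * (u i ^ 2 - u j ^ 2) := Finset.sum_comm
        _ = ∑ j, ∑ i, -(ω j i * (u j ^ 2 - u i ^ 2)) := by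
            refine Finset.sum_congr rfl fun j _ => Finset.sum_congr rfl fun i _ => ?_
            rw [hsym j i]; ring
        _ = -∑ j, ∑ i, ω j i * (u j ^ 2 - u i ^ 2) := by
            simp [Finset.sum_neg_distrib]
    linarith
  have key : ∀ i j : Fin n, ω i j * (u i - u j) ^ 2
      = 2 * (u i * (ω i j * (u i - u j))) - ω i j * (u i ^ 2 - u j ^ 2) := fun i j => by ring
  calc ∑ i, ∑ j, ω i j * (u i - u j) ^ 2
      = ∑ i, ∑ j, (2 * (u i * (ω i j * (u i - u j))) - ω i j * (u i ^ 2 - u j ^ 2)) :=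
        Finset.sum_congr rfl fun i _ => Finset.sum_congr rfl fun j _ => key i j
    _ = (∑ i, ∑ j, 2 * (u i * (ω i j * (u i - u j))))
        - ∑ i, ∑ j, ω i j * (u i ^ 2 - u j ^ 2) := by
        simp [Finset.sum_sub_distrib]
    _ = 2 * (u ⬝ᵥ (stressMatrix ω *ᵥ u)) := by
        rw [hA, sub_zero]
        have hr : ∀ i, (stressMatrix ω *ᵥ u) i = ∑ j, ω i j * (u i - u j) :=
          rowsum ω hdiag u
        simp only [dotProduct, hr, Finset.mul_sum]

/-- Lifted linear independence from a full affine span. -/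
private lemma lift_li {n m : ℕ} (f : Fin n → Fin m → ℝ)
    (h : affineSpan ℝ (Set.range f) = ⊤) :
    LinearIndependent ℝ
      (Fin.cons (fun _ => (1 : ℝ)) (fun k i => f i k) : Fin (m + 1) → Fin n → ℝ) := by
  obtain ⟨x0, i0, -⟩ := AffineSubspace.nonempty_of_affineSpan_eq_top ℝ (Fin m → ℝ) (Fin m → ℝ) h
  have hvs : vectorSpan ℝ (Set.range f) = ⊤ :=
    AffineSubspace.vectorSpan_eq_top_of_affineSpan_eq_top ℝ (Fin m → ℝ) (Fin m → ℝ) h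
  rw [Fintype.linearIndependent_iff]
  intro g hg
  set L : (Fin m → ℝ) →ₗ[ℝ] ℝ :=
    ∑ k, g k.succ • (LinearMap.proj k : (Fin m → ℝ) →ₗ[ℝ] ℝ) with hL
  have hLapp : ∀ x : Fin m → ℝ, L x = ∑ k, g k.succ * x k := by
    intro x
    simp [hL, LinearMap.sum_apply, LinearMap.smul_apply, LinearMap.proj_apply, smul_eq_mul]
  have hval : ∀ i, g 0 + L (f i) = 0 := by
    intro i
    have hgi := congrFun hg i
    simp only [Finset.sum_apply, Pi.smul_apply, smul_eq_mul, Fin.sum_univ_succ,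
      Fin.cons_zero, Fin.cons_succ, Pi.zero_apply, mul_one] at hgi
    rw [hLapp]
    exact hgi
  have hker : vectorSpan ℝ (Set.range f) ≤ LinearMap.ker L := by
    rw [vectorSpan_def, Submodule.span_le]
    rintro x ⟨a, ⟨i, rfl⟩, b, ⟨j, rfl⟩, rfl⟩
    have hi := hval i
    have hj := hval j
    simp only [SetLike.mem_coe, LinearMap.mem_ker, vsub_eq_sub, map_sub]
    linarith
  have hL0 : ∀ x : Fin m → ℝ, L x = 0 := by
    intro x
    have hx : x ∈ LinearMap.ker L := hker (by rw [hvs]; trivial)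
    exact hx
  have hg0 : g 0 = 0 := by
    have := hval i0
    rw [hL0] at this
    linarith
  intro j
  refine Fin.cases hg0 (fun k => ?_) j
  have hk := hL0 (Pi.single k 1)
  rw [hLapp] at hk
  simpa [Pi.single_apply] using hk

/-- a tensegrity framework with a proper PSD stress matrix of rank
`n-r-1` is dimensionally rigid: no `s`-dimensional framework with `s ≥ r + 1` is
dominated by it. -/
theorem statement12 {n r : ℕ}
    (B C S : Set (Fin n × Fin n)) (hG : TensegrityGraph B C S)
    (p : Fin n → Fin r → ℝ)
    (hdim : affineSpan ℝ (Set.range p) = ⊤)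
    (ω : Fin n → Fin n → ℝ)
    (hstress : IsStress (B ∪ C ∪ S) p ω)
    (hproper : IsProperStress C S ω)
    (hpsd : (stressMatrix ω).PosSemidef)
    (hrank : (stressMatrix ω).rank = n - r - 1) :
    ∀ s : ℕ, r + 1 ≤ s → ∀ q : Fin n → Fin s → ℝ,
      affineSpan ℝ (Set.range q) = ⊤ → ¬ Dominates B C S p q := by
  -- basic data from the stress
  obtain ⟨hsym, hzero, heq⟩ := hstress
  have hloop : ∀ i : Fin n, (i, i) ∉ B ∪ C ∪ S := hG.2.2.2.1
  have hdiag : ∀ i, ω i i = 0 := fun i => hzero i i (hloop i)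
  intro s hs q hq hdom
  obtain ⟨hB, hC, hS⟩ := hdom
  -- the stress matrix kills the coordinate columns of p and the all-ones vector
  have hOmp : ∀ k : Fin r, stressMatrix ω *ᵥ (fun i => p i k) = 0 := by
    intro k
    funext i
    rw [rowsum ω hdiag _ i]
    have h := congrFun (heq i) k
    simp only [Finset.sum_apply, Pi.smul_apply, Pi.sub_apply, smul_eq_mul,
      Pi.zero_apply] at h
    simpa using h
  have hOme : stressMatrix ω *ᵥ (fun _ => (1 : ℝ)) = 0 := by
    funext i
    rw [rowsum ω hdiag _ i]
    simp
  -- energy rewriting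
  have hswap : ∀ (d : ℕ) (c : Fin n → Fin d → ℝ),
      ∑ i, ∑ j, ω i j * sqDist (c i) (c j)
        = ∑ k, 2 * ((fun i => c i k) ⬝ᵥ (stressMatrix ω *ᵥ fun i => c i k)) := by
    intro d c
    have h1 : ∀ i j : Fin n, ω i j * sqDist (c i) (c j)
        = ∑ k, ω i j * (c i k - c j k) ^ 2 := by
      intro i j
      rw [sqDist, Finset.mul_sum]
    calc ∑ i, ∑ j, ω i j * sqDist (c i) (c j)
        = ∑ i, ∑ j, ∑ k, ω i j * (c i k - c j k) ^ 2 :=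
          Finset.sum_congr rfl fun i _ => Finset.sum_congr rfl fun j _ => h1 i j
      _ = ∑ i, ∑ k, ∑ j, ω i j * (c i k - c j k) ^ 2 :=
          Finset.sum_congr rfl fun i _ => Finset.sum_comm
      _ = ∑ k, ∑ i, ∑ j, ω i j * (c i k - c j k) ^ 2 := Finset.sum_comm
      _ = ∑ k, 2 * ((fun i => c i k) ⬝ᵥ (stressMatrix ω *ᵥ fun i => c i k)) :=
          Finset.sum_congr rfl fun k _ => quadid ω hsym hdiag _
  -- energy of p vanishes
  have hFp : ∑ i, ∑ j, ω i j * sqDist (p i) (p j) = 0 := by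
    rw [hswap r p]
    simp [hOmp]
  -- energy comparison from domination
  have hpair : ∀ i j : Fin n, ω i j * sqDist (q i) (q j) ≤ ω i j * sqDist (p i) (p j) := by
    intro i j
    by_cases hb : (i, j) ∈ B
    · rw [hB (i, j) hb]
    · by_cases hc : (i, j) ∈ C
      · exact mul_le_mul_of_nonneg_left (hC (i, j) hc) (hproper.1 (i, j) hc)
      · by_cases hst : (i, j) ∈ S
        · exact mul_le_mul_of_nonpos_left (hS (i, j) hst) (hproper.2 (i, j) hst)
        · rw [hzero i j (by simp [Set.mem_union, hb, hc, hst])]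
          simp
  have hFq : ∑ i, ∑ j, ω i j * sqDist (q i) (q j) ≤ 0 := by
    calc ∑ i, ∑ j, ω i j * sqDist (q i) (q j)
        ≤ ∑ i, ∑ j, ω i j * sqDist (p i) (p j) :=
          Finset.sum_le_sum fun i _ => Finset.sum_le_sum fun j _ => hpair i j
      _ = 0 := hFp
  -- the stress matrix kills the coordinate columns of q
  have hterm_nonneg : ∀ k : Fin s, 0 ≤ 2 * ((fun i => q i k) ⬝ᵥ (stressMatrix ω *ᵥ fun i => q i k)) := by
    intro k
    have := hpsd.dotProduct_mulVec_nonneg (fun i => q i k)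
    simp only [star_trivial] at this
    linarith
  have hterm_zero : ∀ k : Fin s,
      2 * ((fun i => q i k) ⬝ᵥ (stressMatrix ω *ᵥ fun i => q i k)) = 0 := by
    have hsum0 : ∑ k, 2 * ((fun i => q i k) ⬝ᵥ (stressMatrix ω *ᵥ fun i => q i k)) = 0 := by
      have hle : ∑ k, 2 * ((fun i => q i k) ⬝ᵥ (stressMatrix ω *ᵥ fun i => q i k)) ≤ 0 := by
        rw [← hswap s q]; exact hFq
      have hge : 0 ≤ ∑ k, 2 * ((fun i => q i k) ⬝ᵥ (stressMatrix ω *ᵥ fun i => q i k)) :=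
        Finset.sum_nonneg fun k _ => hterm_nonneg k
      linarith
    intro k
    exact (Finset.sum_eq_zero_iff_of_nonneg fun k _ => hterm_nonneg k).mp hsum0 k
      (Finset.mem_univ k)
  have hOmq : ∀ k : Fin s, stressMatrix ω *ᵥ (fun i => q i k) = 0 := by
    intro k
    refine (hpsd.dotProduct_mulVec_zero_iff (fun i => q i k)).mp ?_
    have := hterm_zero k
    simp only [star_trivial]
    linarith
  -- kernel dimension count
  set K := LinearMap.ker (stressMatrix ω).mulVecLin with hK
  have hmem : ∀ j : Fin (s + 1),
      (Fin.cons (fun _ => (1 : ℝ)) (fun k i => q i k) : Fin (s + 1) → Fin n → ℝ) j ∈ K := by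
    intro j
    refine Fin.cases ?_ (fun k => ?_) j
    · rw [Fin.cons_zero, hK, LinearMap.mem_ker, Matrix.mulVecLin_apply]
      exact hOme
    · rw [Fin.cons_succ, hK, LinearMap.mem_ker, Matrix.mulVecLin_apply]
      exact hOmq k
  have liQ := lift_li q hq
  set w : Fin (s + 1) → K := fun j => ⟨_, hmem j⟩ with hw
  have liw : LinearIndependent ℝ w := by
    apply LinearIndependent.of_comp K.subtype
    exact liQ
  have hcard : s + 1 ≤ Module.finrank ℝ K := by
    have := liw.fintype_card_le_finrank
    simpa using this
  -- r + 1 ≤ n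
  have liP := lift_li p hdim
  have hrn1 : r + 1 ≤ n := by
    have := liP.fintype_card_le_finrank
    simpa [Module.finrank_fin_fun] using this
  -- rank-nullity
  have hrnull : (stressMatrix ω).rank + Module.finrank ℝ K = n := by
    have := LinearMap.finrank_range_add_finrank_ker (stressMatrix ω).mulVecLin
    rw [Module.finrank_fin_fun] at this
    exact this
  rw [hrank] at hrnull
  omega
end
end

section
/- Let (G,p) be an r-dimensional tensegrity framework in ℝ^r with configuration matrix P satisfying P^T e = 0, and let Ω be a proper stress matrix of (G,p) associated with a proper stress ω. Then there exists a tensegrity framework (G,p') affinely-dominated by, but not congruent to, (G,p) if and only if there exists a non-zero symmetric r×r matrix Φ such that trace(F^{ij} P Φ P^T) = 0 for all {i,j} ∈ B ∪ C* ∪ S*, trace(F^{ij} P Φ P^T) ≤ 0 for all {i,j} ∈ C⁰, and trace(F^{ij} P Φ P^T) ≥ 0 for all {i,j} ∈ S⁰, where C* = {{i,j}∈C : ω_ij ≠ 0}, S* = {{i,j}∈S : ω_ij ≠ 0}, C⁰ = C ∖ C* and S⁰ = S ∖ S*. -/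
open Matrix BigOperators

noncomputable section

namespace Statement15Aux

variable {n r : ℕ}

/-- The linear map `w ↦ x ⬝ᵥ Φ *ᵥ w`. -/
def bl (Φ : Matrix (Fin r) (Fin r) ℝ) (x : Fin r → ℝ) : (Fin r → ℝ) →ₗ[ℝ] ℝ where
  toFun w := x ⬝ᵥ Φ *ᵥ w
  map_add' a b := by
    show x ⬝ᵥ Φ *ᵥ (a + b) = x ⬝ᵥ Φ *ᵥ a + x ⬝ᵥ Φ *ᵥ b
    rw [Matrix.mulVec_add, dotProduct_add]
  map_smul' c a := by
    show x ⬝ᵥ Φ *ᵥ (c • a) = c • (x ⬝ᵥ Φ *ᵥ a)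
    rw [Matrix.mulVec_smul, dotProduct_smul]

/-- The linear map `v ↦ v ⬝ᵥ w`. -/
def dl (w : Fin r → ℝ) : (Fin r → ℝ) →ₗ[ℝ] ℝ where
  toFun v := v ⬝ᵥ w
  map_add' a b := by
    show (a + b) ⬝ᵥ w = a ⬝ᵥ w + b ⬝ᵥ w
    rw [add_dotProduct]
  map_smul' c a := by
    show (c • a) ⬝ᵥ w = c • (a ⬝ᵥ w)
    rw [smul_dotProduct]

lemma sqDist_eq (x y : Fin r → ℝ) : sqDist x y = (x - y) ⬝ᵥ (x - y) := by
  simp [sqDist, dotProduct, pow_two]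

lemma trace_vecMulVec_mul (u v : Fin n → ℝ) (M : Matrix (Fin n) (Fin n) ℝ) :
    (Matrix.vecMulVec u v * M).trace = v ⬝ᵥ M *ᵥ u := by
  simp only [Matrix.trace, Matrix.diag, Matrix.mul_apply, Matrix.vecMulVec_apply,
    dotProduct, Matrix.mulVec]
  rw [Finset.sum_comm]
  apply Finset.sum_congr rfl; intro b _
  rw [Finset.mul_sum]
  apply Finset.sum_congr rfl; intro a _
  ring

lemma transpose_mulVec_single_sub (p : Fin n → Fin r → ℝ) (i j : Fin n) :
    (Matrix.of p)ᵀ *ᵥ (Pi.single i 1 - Pi.single j 1) = p i - p j := by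
  funext k
  simp [Matrix.mulVec, dotProduct, Pi.single_apply, mul_sub, mul_ite,
    Finset.sum_sub_distrib, Finset.sum_ite_eq, Finset.sum_ite_eq']

lemma trace_Fmat (p : Fin n → Fin r → ℝ) (Φ : Matrix (Fin r) (Fin r) ℝ) (i j : Fin n) :
    (Fmat i j * (Matrix.of p * Φ * (Matrix.of p)ᵀ)).trace
      = (p i - p j) ⬝ᵥ Φ *ᵥ (p i - p j) := by
  rw [Fmat, trace_vecMulVec_mul]
  rw [show (Matrix.of p * Φ * (Matrix.of p)ᵀ) *ᵥ (Pi.single i 1 - Pi.single j 1)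
      = Matrix.of p *ᵥ (Φ *ᵥ ((Matrix.of p)ᵀ *ᵥ (Pi.single i 1 - Pi.single j 1))) from by
    rw [Matrix.mulVec_mulVec, Matrix.mulVec_mulVec]]
  have h3 : (Pi.single i 1 - Pi.single j 1) ᵥ* (Matrix.of p) = p i - p j := by
    rw [← Matrix.mulVec_transpose, transpose_mulVec_single_sub]
  rw [Matrix.dotProduct_mulVec _ (Matrix.of p), h3, transpose_mulVec_single_sub]

lemma sqDist_affine (A : Matrix (Fin r) (Fin r) ℝ) (b x y : Fin r → ℝ) :
    sqDist (A *ᵥ x + b) (A *ᵥ y + b)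
      = sqDist x y + (x - y) ⬝ᵥ (Aᵀ * A - 1) *ᵥ (x - y) := by
  rw [sqDist_eq, sqDist_eq]
  have h1 : A *ᵥ x + b - (A *ᵥ y + b) = A *ᵥ (x - y) := by
    rw [Matrix.mulVec_sub]; abel
  rw [h1]
  have h2 : (A *ᵥ (x - y)) ⬝ᵥ (A *ᵥ (x - y)) = (x - y) ⬝ᵥ (Aᵀ * A) *ᵥ (x - y) := by
    rw [Matrix.dotProduct_mulVec _ A, ← Matrix.mulVec_transpose, Matrix.mulVec_mulVec,
      dotProduct_comm]
  have h4 : (x - y) ⬝ᵥ (Aᵀ * A - 1) *ᵥ (x - y)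
      = (x - y) ⬝ᵥ (Aᵀ * A) *ᵥ (x - y) - (x - y) ⬝ᵥ (x - y) := by
    rw [Matrix.sub_mulVec, dotProduct_sub, Matrix.one_mulVec]
  rw [h2, h4]; ring

lemma span_top (p : Fin n → Fin r → ℝ)
    (hdim : affineSpan ℝ (Set.range p) = ⊤) :
    Submodule.span ℝ (Set.range p) = ⊤ := by
  have h1 : vectorSpan ℝ (Set.range p) = ⊤ := by
    rw [← direction_affineSpan, hdim]
    exact AffineSubspace.direction_top ℝ _ _
  rw [eq_top_iff, ← h1, vectorSpan_def]
  refine Submodule.span_le.2 ?_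
  rintro v hv
  rcases Set.mem_vsub.1 hv with ⟨a, ha, c, hc, rfl⟩
  exact sub_mem (Submodule.subset_span ha) (Submodule.subset_span hc)

lemma n_pos (p : Fin n → Fin r → ℝ)
    (hdim : affineSpan ℝ (Set.range p) = ⊤) : 0 < n := by
  rcases Nat.eq_zero_or_pos n with h0 | h
  · exfalso
    subst h0
    have he : Set.range p = ∅ := Set.range_eq_empty _
    rw [he, AffineSubspace.span_empty] at hdim
    have h2 : (0 : Fin r → ℝ) ∈ (⊥ : AffineSubspace ℝ (Fin r → ℝ)) := by
      rw [hdim]; trivial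
    rw [← AffineSubspace.mem_coe, AffineSubspace.bot_coe] at h2
    exact h2
  · exact h

/-- If the symmetric quadratic form of `Φ` vanishes on all differences of a spanning
centered configuration, then `Φ = 0`. -/
lemma phi_eq_zero (p : Fin n → Fin r → ℝ)
    (hdim : affineSpan ℝ (Set.range p) = ⊤)
    (hcent : ∀ k, ∑ i, p i k = 0)
    (Φ : Matrix (Fin r) (Fin r) ℝ) (hΦ : Φ.IsSymm)
    (h : ∀ i j, (p i - p j) ⬝ᵥ Φ *ᵥ (p i - p j) = 0) : Φ = 0 := by
  have hn : 0 < n := n_pos p hdim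
  have hspan := span_top p hdim
  have hsymm : ∀ x y : Fin r → ℝ, x ⬝ᵥ Φ *ᵥ y = y ⬝ᵥ Φ *ᵥ x := by
    intro x y
    rw [Matrix.dotProduct_mulVec x Φ y]
    conv_lhs => rw [← hΦ.eq, Matrix.vecMul_transpose]
    exact dotProduct_comm _ _
  have hsum0 : (∑ j, p j) = 0 := by
    funext k; rw [Finset.sum_apply]; exact hcent k
  have hb0 : ∀ x : Fin r → ℝ, ∑ j, x ⬝ᵥ Φ *ᵥ p j = 0 := by
    intro x
    have : ∑ j, bl Φ x (p j) = bl Φ x (∑ j, p j) := (map_sum (bl Φ x) _ _).symm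
    simpa [bl, hsum0] using this
  have hexp : ∀ i j, (p i - p j) ⬝ᵥ Φ *ᵥ (p i - p j)
      = p i ⬝ᵥ Φ *ᵥ p i + p j ⬝ᵥ Φ *ᵥ p j - 2 * (p i ⬝ᵥ Φ *ᵥ p j) := by
    intro i j
    rw [sub_dotProduct, Matrix.mulVec_sub, dotProduct_sub,
      dotProduct_sub, hsymm (p j) (p i)]
    ring
  set c : Fin n → ℝ := fun i => p i ⬝ᵥ Φ *ᵥ p i with hc
  set T : ℝ := ∑ i, c i with hT
  have key : ∀ i, (n : ℝ) * c i + T = 0 := by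
    intro i
    have : ∑ j, (p i - p j) ⬝ᵥ Φ *ᵥ (p i - p j) = 0 :=
      Finset.sum_eq_zero fun j _ => h i j
    calc (n : ℝ) * c i + T = ∑ j, (c i + c j - 2 * (p i ⬝ᵥ Φ *ᵥ p j)) := by
          rw [Finset.sum_sub_distrib, Finset.sum_add_distrib, Finset.sum_const,
            ← Finset.mul_sum, hb0 (p i)]
          simp [hT, mul_comm]
      _ = ∑ j, (p i - p j) ⬝ᵥ Φ *ᵥ (p i - p j) := by
          apply Finset.sum_congr rfl; intro j _; rw [hexp i j]
      _ = 0 := this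
  have hTzero : T = 0 := by
    have h2 : ∑ i, ((n : ℝ) * c i + T) = 0 := Finset.sum_eq_zero fun i _ => key i
    rw [Finset.sum_add_distrib, ← Finset.mul_sum, Finset.sum_const, Finset.card_univ,
      Fintype.card_fin, nsmul_eq_mul, ← hT] at h2
    have hnR : (0 : ℝ) < (n : ℝ) := by exact_mod_cast hn
    nlinarith
  have hczero : ∀ i, c i = 0 := by
    intro i
    have := key i
    rw [hTzero, add_zero] at this
    have hnR : (0 : ℝ) < (n : ℝ) := by exact_mod_cast hn
    exact (mul_eq_zero.1 this).resolve_left (by positivity)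
  have hbij : ∀ i j, p i ⬝ᵥ Φ *ᵥ p j = 0 := by
    intro i j
    have h1 := h i j
    rw [hexp i j] at h1
    have e1 : p i ⬝ᵥ Φ *ᵥ p i = 0 := hczero i
    have e2 : p j ⬝ᵥ Φ *ᵥ p j = 0 := hczero j
    linarith
  have hw : ∀ j, Φ *ᵥ p j = 0 := by
    intro j
    have hker : Submodule.span ℝ (Set.range p) ≤ LinearMap.ker (dl (Φ *ᵥ p j)) := by
      refine Submodule.span_le.2 ?_
      rintro _ ⟨i, rfl⟩
      exact LinearMap.mem_ker.2 (hbij i j)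
    rw [hspan, top_le_iff, LinearMap.ker_eq_top] at hker
    have := congrFun (congrArg (fun f : (Fin r → ℝ) →ₗ[ℝ] ℝ => f.toFun) hker) (Φ *ᵥ p j)
    exact dotProduct_self_eq_zero.1 this
  have hkerΦ : Submodule.span ℝ (Set.range p) ≤ LinearMap.ker Φ.mulVecLin := by
    refine Submodule.span_le.2 ?_
    rintro _ ⟨i, rfl⟩
    exact LinearMap.mem_ker.2 (by rw [Matrix.mulVecLin_apply]; exact hw i)
  rw [hspan, top_le_iff, LinearMap.ker_eq_top] at hkerΦ
  ext k l
  have : Φ *ᵥ Pi.single l 1 = 0 := by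
    have := congrFun (congrArg (fun f : (Fin r → ℝ) →ₗ[ℝ] (Fin r → ℝ) => f.toFun) hkerΦ)
      (Pi.single l 1)
    rw [← Matrix.mulVecLin_apply]; exact this
  have h2 := congrFun this k
  simpa [Matrix.mulVec_single] using h2

open scoped MatrixOrder in
/-- Square root of a positive semidefinite matrix. -/
def psdSqrt (M : Matrix (Fin r) (Fin r) ℝ) : Matrix (Fin r) (Fin r) ℝ := CFC.sqrt M

open scoped MatrixOrder in
lemma psdSqrt_herm {M : Matrix (Fin r) (Fin r) ℝ} (hM : M.PosSemidef) :
    (psdSqrt M)ᴴ = psdSqrt M :=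
  (CFC.sqrt_nonneg M).posSemidef.1

open scoped MatrixOrder in
lemma psdSqrt_mul_self {M : Matrix (Fin r) (Fin r) ℝ} (hM : M.PosSemidef) :
    psdSqrt M * psdSqrt M = M :=
  CFC.sqrt_mul_sqrt_self M hM.nonneg

end Statement15Aux

open Statement15Aux

/-- given a proper stress `ω`, there is a framework affinely-dominated
by but not congruent to `(G,p)` iff there is a non-zero symmetric `Φ` with
`trace (F^{ij} P Φ Pᵀ)` zero on `B ∪ C* ∪ S*`, `≤ 0` on `C⁰` and `≥ 0` on `S⁰`. -/
theorem statement15 {n r : ℕ}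
    (B C S : Set (Fin n × Fin n)) (hG : TensegrityGraph B C S)
    (p : Fin n → Fin r → ℝ)
    (hdim : affineSpan ℝ (Set.range p) = ⊤)
    (hcentroid : ∀ k, ∑ i, p i k = 0)
    (ω : Fin n → Fin n → ℝ)
    (hstress : IsStress (B ∪ C ∪ S) p ω)
    (hproper : IsProperStress C S ω) :
    (∃ p' : Fin n → Fin r → ℝ,
        AffinelyDominated B C S p p' ∧ ¬ TensegrityCongruent p p') ↔
      ∃ Φ : Matrix (Fin r) (Fin r) ℝ, Φ ≠ 0 ∧ Φ.IsSymm ∧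
        (∀ e : Fin n × Fin n,
          (e ∈ B ∨ (e ∈ C ∧ ω e.1 e.2 ≠ 0) ∨ (e ∈ S ∧ ω e.1 e.2 ≠ 0)) →
          (Fmat e.1 e.2 * (Matrix.of p * Φ * (Matrix.of p)ᵀ)).trace = 0) ∧
        (∀ e ∈ C, ω e.1 e.2 = 0 →
          (Fmat e.1 e.2 * (Matrix.of p * Φ * (Matrix.of p)ᵀ)).trace ≤ 0) ∧
        (∀ e ∈ S, ω e.1 e.2 = 0 →
          0 ≤ (Fmat e.1 e.2 * (Matrix.of p * Φ * (Matrix.of p)ᵀ)).trace) := by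
  obtain ⟨hωsym, hωsupp, hωeq⟩ := hstress
  constructor
  · rintro ⟨p', ⟨⟨hB, hC, hS⟩, A, b, hA⟩, hnc⟩
    set Φ := Aᵀ * A - 1 with hΦdef
    have hsq : ∀ i j, sqDist (p' i) (p' j)
        = sqDist (p i) (p j) + (p i - p j) ⬝ᵥ Φ *ᵥ (p i - p j) := by
      intro i j; rw [hA i, hA j, sqDist_affine]
    have hΦsymm : Φ.IsSymm := by
      show Φᵀ = Φ
      rw [hΦdef, Matrix.transpose_sub, Matrix.transpose_mul, Matrix.transpose_transpose,
        Matrix.transpose_one]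
    have tB : ∀ e ∈ B, (p e.1 - p e.2) ⬝ᵥ Φ *ᵥ (p e.1 - p e.2) = 0 := by
      intro e he; have h1 := hB e he; rw [hsq e.1 e.2] at h1; linarith
    have tC : ∀ e ∈ C, (p e.1 - p e.2) ⬝ᵥ Φ *ᵥ (p e.1 - p e.2) ≤ 0 := by
      intro e he; have h1 := hC e he; rw [hsq e.1 e.2] at h1; linarith
    have tS : ∀ e ∈ S, 0 ≤ (p e.1 - p e.2) ⬝ᵥ Φ *ᵥ (p e.1 - p e.2) := by
      intro e he; have h1 := hS e he; rw [hsq e.1 e.2] at h1; linarith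
    have hne : Φ ≠ 0 := by
      intro h0
      apply hnc
      intro i j
      rw [hsq i j, h0, Matrix.zero_mulVec, dotProduct_zero, add_zero]
    have eqrow : ∀ (i : Fin n) (x : Fin r → ℝ),
        ∑ j, ω i j * (x ⬝ᵥ Φ *ᵥ (p i - p j)) = 0 := by
      intro i x
      calc ∑ j, ω i j * (x ⬝ᵥ Φ *ᵥ (p i - p j))
          = ∑ j, bl Φ x (ω i j • (p i - p j)) := by
            apply Finset.sum_congr rfl; intro j _
            rw [_root_.map_smul, smul_eq_mul]; rfl
        _ = bl Φ x (∑ j, ω i j • (p i - p j)) := (map_sum _ _ _).symm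
        _ = 0 := by rw [hωeq i, map_zero]
    have eqcol : ∀ (j : Fin n) (x : Fin r → ℝ),
        ∑ i, ω i j * (x ⬝ᵥ Φ *ᵥ (p i - p j)) = 0 := by
      intro j x
      have h0 : ∑ i, ω i j • (p i - p j) = 0 := by
        have h2 : ∑ i, ω i j • (p i - p j) = -∑ i, ω j i • (p j - p i) := by
          rw [← Finset.sum_neg_distrib]
          apply Finset.sum_congr rfl; intro i _
          rw [hωsym i j, ← smul_neg, neg_sub]
        rw [h2, hωeq j, neg_zero]
      calc ∑ i, ω i j * (x ⬝ᵥ Φ *ᵥ (p i - p j))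
          = ∑ i, bl Φ x (ω i j • (p i - p j)) := by
            apply Finset.sum_congr rfl; intro i _
            rw [_root_.map_smul, smul_eq_mul]; rfl
        _ = bl Φ x (∑ i, ω i j • (p i - p j)) := (map_sum _ _ _).symm
        _ = 0 := by rw [h0, map_zero]
    have total : ∑ x : Fin n × Fin n,
        ω x.1 x.2 * ((p x.1 - p x.2) ⬝ᵥ Φ *ᵥ (p x.1 - p x.2)) = 0 := by
      rw [Fintype.sum_prod_type]
      have expand : ∀ i j : Fin n, ω i j * ((p i - p j) ⬝ᵥ Φ *ᵥ (p i - p j))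
          = ω i j * (p i ⬝ᵥ Φ *ᵥ (p i - p j)) - ω i j * (p j ⬝ᵥ Φ *ᵥ (p i - p j)) := by
        intro i j; rw [sub_dotProduct]; ring
      calc ∑ i, ∑ j, ω i j * ((p i - p j) ⬝ᵥ Φ *ᵥ (p i - p j))
          = ∑ i, ∑ j, (ω i j * (p i ⬝ᵥ Φ *ᵥ (p i - p j))
              - ω i j * (p j ⬝ᵥ Φ *ᵥ (p i - p j))) := by
            apply Finset.sum_congr rfl; intro i _
            apply Finset.sum_congr rfl; intro j _
            exact expand i j
        _ = (∑ i, ∑ j, ω i j * (p i ⬝ᵥ Φ *ᵥ (p i - p j)))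
              - ∑ i, ∑ j, ω i j * (p j ⬝ᵥ Φ *ᵥ (p i - p j)) := by
            rw [← Finset.sum_sub_distrib]
            apply Finset.sum_congr rfl; intro i _
            rw [Finset.sum_sub_distrib]
        _ = 0 - 0 := by
            congr 1
            · exact Finset.sum_eq_zero fun i _ => eqrow i (p i)
            · rw [Finset.sum_comm]
              exact Finset.sum_eq_zero fun j _ => eqcol j (p j)
        _ = 0 := by ring
    have hterm : ∀ x : Fin n × Fin n,
        ω x.1 x.2 * ((p x.1 - p x.2) ⬝ᵥ Φ *ᵥ (p x.1 - p x.2)) ≤ 0 := by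
      intro e
      by_cases hb : e ∈ B
      · rw [tB e hb, mul_zero]
      by_cases hc : e ∈ C
      · nlinarith [hproper.1 e hc, tC e hc]
      by_cases hs : e ∈ S
      · nlinarith [hproper.2 e hs, tS e hs]
      · have h0 : ω e.1 e.2 = 0 := by
          apply hωsupp e.1 e.2
          intro hmem
          rcases hmem with (hmem | hmem) | hmem
          · exact hb (by rwa [Prod.mk.eta] at hmem)
          · exact hc (by rwa [Prod.mk.eta] at hmem)
          · exact hs (by rwa [Prod.mk.eta] at hmem)
        rw [h0, zero_mul]
    have hzero : ∀ x : Fin n × Fin n,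
        ω x.1 x.2 * ((p x.1 - p x.2) ⬝ᵥ Φ *ᵥ (p x.1 - p x.2)) = 0 := by
      intro e
      exact (Finset.sum_eq_zero_iff_of_nonpos fun i _ => hterm i).1 total e
        (Finset.mem_univ e)
    refine ⟨Φ, hne, hΦsymm, ?_, ?_, ?_⟩
    · rintro e (heB | ⟨heC, hω⟩ | ⟨heS, hω⟩)
      · rw [trace_Fmat]; exact tB e heB
      · rw [trace_Fmat]
        exact (mul_eq_zero.1 (hzero e)).resolve_left hω
      · rw [trace_Fmat]
        exact (mul_eq_zero.1 (hzero e)).resolve_left hω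
    · intro e heC _
      rw [trace_Fmat]; exact tC e heC
    · intro e heS _
      rw [trace_Fmat]; exact tS e heS
  · rintro ⟨Φ, hΦne, hΦsymm, hE, hC0, hS0⟩
    have tE : ∀ e : Fin n × Fin n,
        (e ∈ B ∨ (e ∈ C ∧ ω e.1 e.2 ≠ 0) ∨ (e ∈ S ∧ ω e.1 e.2 ≠ 0)) →
        (p e.1 - p e.2) ⬝ᵥ Φ *ᵥ (p e.1 - p e.2) = 0 := by
      intro e he; rw [← trace_Fmat]; exact hE e he
    have tC0 : ∀ e ∈ C, ω e.1 e.2 = 0 →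
        (p e.1 - p e.2) ⬝ᵥ Φ *ᵥ (p e.1 - p e.2) ≤ 0 := by
      intro e he hω; rw [← trace_Fmat]; exact hC0 e he hω
    have tS0 : ∀ e ∈ S, ω e.1 e.2 = 0 →
        0 ≤ (p e.1 - p e.2) ⬝ᵥ Φ *ᵥ (p e.1 - p e.2) := by
      intro e he hω; rw [← trace_Fmat]; exact hS0 e he hω
    set c : ℝ := ∑ k, ∑ l, |Φ k l| with hcdef
    have hc0 : 0 ≤ c :=
      Finset.sum_nonneg fun _ _ => Finset.sum_nonneg fun _ _ => abs_nonneg _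
    set ε : ℝ := 1 / (1 + c) with hεdef
    have h1c : (0 : ℝ) < 1 + c := by linarith
    have hεpos : 0 < ε := by rw [hεdef]; positivity
    have hεc : ε * c ≤ 1 := by
      rw [hεdef, div_mul_eq_mul_div, one_mul, div_le_one h1c]; linarith
    have hdotself : ∀ x : Fin r → ℝ, (0 : ℝ) ≤ x ⬝ᵥ x := fun x =>
      Finset.sum_nonneg fun i _ => mul_self_nonneg (x i)
    have hbound : ∀ x : Fin r → ℝ, |x ⬝ᵥ Φ *ᵥ x| ≤ c * (x ⬝ᵥ x) := by
      intro x
      have hxx : ∀ k l : Fin r, |x k * x l| ≤ x ⬝ᵥ x := by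
        intro k l
        have h1 : x k * x k ≤ x ⬝ᵥ x :=
          Finset.single_le_sum (f := fun m => x m * x m)
            (fun m _ => mul_self_nonneg (x m)) (Finset.mem_univ k)
        have h2 : x l * x l ≤ x ⬝ᵥ x :=
          Finset.single_le_sum (f := fun m => x m * x m)
            (fun m _ => mul_self_nonneg (x m)) (Finset.mem_univ l)
        have h3 : |x k * x l| ≤ (x k * x k + x l * x l) / 2 := by
          rw [abs_mul]
          nlinarith [sq_nonneg (|x k| - |x l|), abs_nonneg (x k), abs_nonneg (x l),
            sq_abs (x k), sq_abs (x l)]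
        linarith
      have expand : x ⬝ᵥ Φ *ᵥ x = ∑ k, ∑ l, x k * (Φ k l * x l) := by
        simp [dotProduct, Matrix.mulVec, Finset.mul_sum]
      rw [expand, hcdef]
      calc |∑ k, ∑ l, x k * (Φ k l * x l)|
          ≤ ∑ k, |∑ l, x k * (Φ k l * x l)| := Finset.abs_sum_le_sum_abs _ _
        _ ≤ ∑ k, ∑ l, |x k * (Φ k l * x l)| :=
            Finset.sum_le_sum fun k _ => Finset.abs_sum_le_sum_abs _ _
        _ ≤ ∑ k, ∑ l, |Φ k l| * (x ⬝ᵥ x) := by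
            apply Finset.sum_le_sum; intro k _
            apply Finset.sum_le_sum; intro l _
            have h4 : |x k * (Φ k l * x l)| = |Φ k l| * |x k * x l| := by
              rw [abs_mul, abs_mul, abs_mul]; ring
            rw [h4]
            exact mul_le_mul_of_nonneg_left (hxx k l) (abs_nonneg _)
        _ = (∑ k, ∑ l, |Φ k l|) * (x ⬝ᵥ x) := by
            rw [Finset.sum_mul]
            apply Finset.sum_congr rfl; intro k _
            rw [Finset.sum_mul]
    have hM : Matrix.PosSemidef (1 + ε • Φ) := by
      refine Matrix.PosSemidef.of_dotProduct_mulVec_nonneg ?_ ?_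
      · show (1 + ε • Φ)ᴴ = 1 + ε • Φ
        rw [Matrix.conjTranspose_eq_transpose_of_trivial, Matrix.transpose_add,
          Matrix.transpose_one, Matrix.transpose_smul, hΦsymm.eq]
      · intro x
        have hsx : star x = x := by funext k; simp
        rw [hsx, Matrix.add_mulVec, dotProduct_add, Matrix.one_mulVec,
          Matrix.smul_mulVec, dotProduct_smul, smul_eq_mul]
        have hq := (abs_le.1 (hbound x)).1
        have hS0' := hdotself x
        nlinarith [mul_le_mul_of_nonneg_left hq hεpos.le]
    set A : Matrix (Fin r) (Fin r) ℝ := psdSqrt (1 + ε • Φ) with hAdef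
    have hAher : Aᵀ = A := by
      have h1 : Aᴴ = A := psdSqrt_herm hM
      rwa [Matrix.conjTranspose_eq_transpose_of_trivial] at h1
    have hAA : Aᵀ * A = 1 + ε • Φ := by rw [hAher, hAdef, psdSqrt_mul_self hM]
    have hsq : ∀ i j, sqDist (A *ᵥ p i) (A *ᵥ p j)
        = sqDist (p i) (p j) + ε * ((p i - p j) ⬝ᵥ Φ *ᵥ (p i - p j)) := by
      intro i j
      have h1 := sqDist_affine A 0 (p i) (p j)
      rw [add_zero, add_zero] at h1
      rw [h1, hAA]
      congr 1
      rw [show (1 : Matrix (Fin r) (Fin r) ℝ) + ε • Φ - 1 = ε • Φ from by abel,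
        Matrix.smul_mulVec, dotProduct_smul, smul_eq_mul]
    refine ⟨fun i => A *ᵥ p i, ⟨⟨?_, ?_, ?_⟩, A, 0, fun i => by rw [add_zero]⟩, ?_⟩
    · intro e he
      rw [hsq, tE e (Or.inl he), mul_zero, add_zero]
    · intro e he
      rw [hsq]
      by_cases hω : ω e.1 e.2 = 0
      · nlinarith [tC0 e he hω, hεpos]
      · rw [tE e (Or.inr (Or.inl ⟨he, hω⟩)), mul_zero, add_zero]
    · intro e he
      rw [hsq]
      by_cases hω : ω e.1 e.2 = 0
      · nlinarith [tS0 e he hω, hεpos]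
      · rw [tE e (Or.inr (Or.inr ⟨he, hω⟩)), mul_zero, add_zero]
    · intro hcong
      have ht : ∀ i j, (p i - p j) ⬝ᵥ Φ *ᵥ (p i - p j) = 0 := by
        intro i j
        have h1 := hcong i j
        rw [hsq i j] at h1
        have h2 : ε * ((p i - p j) ⬝ᵥ Φ *ᵥ (p i - p j)) = 0 := by linarith
        exact (mul_eq_zero.1 h2).resolve_left (ne_of_gt hεpos)
      exact hΦne (phi_eq_zero p hdim hcentroid Φ hΦsymm ht)
end
end
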